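/- If a graph G = (V,E) without self-loops is 3-colorable with coloring f: V → {1,2,3}, then the partition of D_G obtained by assigning the i-th set of auxiliary rows to block T_i and assigning row 3n+v (corresponding to node v) to block T_{f(v)} yields σ_{r_0}(T_i) = 1 for each i ∈ {1,2,3}. -/
import Mathlib


/-- The matrix `M_G` of the RDF graph `D_G` built from a loop-free undirected
graph on nodes `0, …, N-1` with adjacency `adj`: a `(4N) × (2N+3)` 0/1 matrix
with three upper auxiliary sections (sections `0,1,2`) and one lower section
(section `3`).  Columns: `0 = sp1`, `1 = sp2`, `2 = idp`, then a left column
set of `N` columns (identity blocks) and a right column set of `N` columns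
(identity blocks in the upper sections, complemented adjacency matrix in the
lower section). -/
def MG (N : ℕ) (adj : ℕ → ℕ → Bool) (r : Fin (4 * N)) (c : Fin (2 * N + 3)) : Bool :=
  let sec := r.val / N
  let i := r.val % N
  if c.val = 0 then decide (sec = 2 ∨ sec = 3)
  else if c.val = 1 then decide (sec = 1 ∨ sec = 3)
  else if c.val = 2 then decide (sec ≠ 3)
  else if c.val < 3 + N then decide (c.val = 3 + i)
  else if sec ≠ 3 then decide (c.val = 3 + N + i)
  else !(adj i (c.val - (3 + N)))

/-- A cell of the submatrix of `M_G` induced by the set `T` of rows. -/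
abbrev CellT (N : ℕ) (T : Finset (Fin (4 * N))) :=
  {r : Fin (4 * N) // r ∈ T} × Fin (2 * N + 3)

/-- The antecedent of the fixed rule `r₀`, for a variable assignment `ρ` of the
eleven variables `x, c₁, c₂, y, d₁, d₂, z, e, u, f₁, f₂` (indexed
`0, …, 10` in this order) to cells of the submatrix of `M_G` with rows `T`. -/
def AntR0 (N : ℕ) (adj : ℕ → ℕ → Bool) (T : Finset (Fin (4 * N)))
    (ρ : Fin 11 → CellT N T) : Prop :=
  let sj : Fin 11 → Fin (4 * N) := fun k => ((ρ k).1 : Fin (4 * N))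
  let pr : Fin 11 → Fin (2 * N + 3) := fun k => (ρ k).2
  let vl : Fin 11 → Bool := fun k => MG N adj ((ρ k).1 : Fin (4 * N)) ((ρ k).2)
  -- no variable among c₁,c₂,d₁,d₂,e,f₁,f₂ points to columns sp1 or sp2
  (∀ k : Fin 11, k ∈ ({1, 2, 4, 5, 7, 9, 10} : Finset (Fin 11)) →
      (pr k).val ≠ 0 ∧ (pr k).val ≠ 1) ∧
  -- prop(x) = idp ∧ val(x) = 1
  (pr 0).val = 2 ∧ vl 0 = true ∧
  -- c₁ ≠ x ∧ subj(c₁) = subj(x) ∧ val(c₁) = 1, same for c₂, and c₁ ≠ c₂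
  ρ 1 ≠ ρ 0 ∧ sj 1 = sj 0 ∧ vl 1 = true ∧
  ρ 2 ≠ ρ 0 ∧ sj 2 = sj 0 ∧ vl 2 = true ∧
  ρ 1 ≠ ρ 2 ∧
  -- prop(y) = idp ∧ val(y) = 0 ∧ d₁, d₂ on the row of y and the columns of c₁, c₂
  (pr 3).val = 2 ∧ vl 3 = false ∧
  sj 4 = sj 3 ∧ pr 4 = pr 1 ∧
  sj 5 = sj 3 ∧ pr 5 = pr 2 ∧
  -- prop(z) = idp ∧ subj(z) = subj(e) ∧ prop(e) = prop(c₁) ∧ e ≠ c₁ ∧ val(e) = 1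
  (pr 6).val = 2 ∧ sj 6 = sj 7 ∧ pr 7 = pr 1 ∧ ρ 7 ≠ ρ 1 ∧ vl 7 = true ∧
  -- prop(u) = idp ∧ val(u) = 0 ∧ f₁, f₂ on the row of u and the columns of c₁, c₂
  (pr 8).val = 2 ∧ vl 8 = false ∧
  sj 8 = sj 9 ∧ pr 9 = pr 1 ∧
  sj 8 = sj 10 ∧ pr 10 = pr 2 ∧
  -- val(f₁) = 1 ∧ val(f₂) = 1
  vl 9 = true ∧ vl 10 = true

/-- The consequent of the rule `r₀`: `(val(d₁) = 1 ∨ val(d₂) = 1) ∧ val(z) = 0`. -/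
def ConseqR0 (N : ℕ) (adj : ℕ → ℕ → Bool) (T : Finset (Fin (4 * N)))
    (ρ : Fin 11 → CellT N T) : Prop :=
  let vl : Fin 11 → Bool := fun k => MG N adj ((ρ k).1 : Fin (4 * N)) ((ρ k).2)
  (vl 4 = true ∨ vl 5 = true) ∧ vl 6 = false

/-- The structuredness `σ_{r₀}` of the subgraph of `D_G` given by rows `T`:
favorable over total cases, `1` if there are no total cases. -/
noncomputable def sigmaR0 (N : ℕ) (adj : ℕ → ℕ → Bool)
    (T : Finset (Fin (4 * N))) : ℚ :=
  let total := Nat.card {ρ : Fin 11 → CellT N T // AntR0 N adj T ρ}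
  let fav := Nat.card {ρ : Fin 11 → CellT N T // AntR0 N adj T ρ ∧ ConseqR0 N adj T ρ}
  if total = 0 then 1 else (fav : ℚ) / total

section Helpers
variable {N : ℕ} {adj : ℕ → ℕ → Bool}

lemma MG_idp (r : Fin (4*N)) (c : Fin (2*N+3)) (hc : c.val = 2) :
    MG N adj r c = decide (r.val / N ≠ 3) := by
  simp only [MG, hc]; norm_num

lemma MG_upper_cols (r : Fin (4*N)) (c : Fin (2*N+3)) (hsec : r.val / N ≠ 3)
    (h0 : c.val ≠ 0) (h1 : c.val ≠ 1) (hv : MG N adj r c = true) :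
    c.val = 2 ∨ c.val = 3 + r.val % N ∨ c.val = 3 + N + r.val % N := by
  simp only [MG, if_neg h0, if_neg h1] at hv
  by_cases h2 : c.val = 2
  · exact Or.inl h2
  rw [if_neg h2] at hv
  by_cases h3 : c.val < 3 + N
  · rw [if_pos h3, decide_eq_true_iff] at hv; exact Or.inr (Or.inl hv)
  · rw [if_neg h3, if_pos hsec, decide_eq_true_iff] at hv; exact Or.inr (Or.inr hv)

lemma MG_upper_left_true (r : Fin (4*N)) (c : Fin (2*N+3))
    {j : ℕ} (hc : c.val = 3 + j) (hj : j < N) (hv : MG N adj r c = true) :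
    r.val % N = j := by
  simp only [MG, if_neg (by omega : ¬ c.val = 0), if_neg (by omega : ¬ c.val = 1),
    if_neg (by omega : ¬ c.val = 2), if_pos (by omega : c.val < 3 + N),
    decide_eq_true_iff] at hv
  omega

lemma MG_upper_right_true (r : Fin (4*N)) (c : Fin (2*N+3)) (hsec : r.val / N ≠ 3)
    {j : ℕ} (hc : c.val = 3 + N + j) (hv : MG N adj r c = true) :
    r.val % N = j := by
  simp only [MG, if_neg (by omega : ¬ c.val = 0), if_neg (by omega : ¬ c.val = 1),
    if_neg (by omega : ¬ c.val = 2), if_neg (by omega : ¬ c.val < 3 + N),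
    if_pos hsec, decide_eq_true_iff] at hv
  omega

lemma MG_lower_right (r : Fin (4*N)) (c : Fin (2*N+3)) (hsec : r.val / N = 3)
    {j : ℕ} (hc : c.val = 3 + N + j) :
    MG N adj r c = !(adj (r.val % N) j) := by
  simp only [MG, if_neg (by omega : ¬ c.val = 0), if_neg (by omega : ¬ c.val = 1),
    if_neg (by omega : ¬ c.val = 2), if_neg (by omega : ¬ c.val < 3 + N),
    if_neg (by omega : ¬ r.val / N ≠ 3)]
  have h : c.val - (3 + N) = j := by omega
  rw [h]

end Helpers

/-- If `G` is 3-colorable via `f`, then assigning the `i`-th auxiliary section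
of rows of `M_G` to block `T_i` and the lower-section row `3N + v` (node `v`)
to block `T_{f(v)}` yields `σ_{r₀}(T_i) = 1` for each of the three blocks. -/
theorem stmt9 (N : ℕ) (hN : 0 < N) (adj : ℕ → ℕ → Bool)
    (hsym : ∀ i j, adj i j = adj j i) (hirr : ∀ i, adj i i = false)
    (f : ℕ → Fin 3) (hf : ∀ i j, i < N → j < N → adj i j = true → f i ≠ f j) :
    ∀ t : Fin 3,
      sigmaR0 N adj (Finset.univ.filter (fun r : Fin (4 * N) =>
        (if h : r.val < 3 * N then
            (⟨r.val / N, Nat.div_lt_of_lt_mul (by omega)⟩ : Fin 3)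
          else f (r.val - 3 * N)) = t)) = 1 := by
  intro t
  set T : Finset (Fin (4 * N)) := Finset.univ.filter (fun r : Fin (4 * N) =>
        (if h : r.val < 3 * N then
            (⟨r.val / N, Nat.div_lt_of_lt_mul (by omega)⟩ : Fin 3)
          else f (r.val - 3 * N)) = t) with hT
  have memT : ∀ r : Fin (4 * N), r ∈ T →
      (if h : r.val < 3 * N then
          (⟨r.val / N, Nat.div_lt_of_lt_mul (by omega)⟩ : Fin 3)
        else f (r.val - 3 * N)) = t := by
    intro r hr
    rw [hT, Finset.mem_filter] at hr
    exact hr.2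
  have mem_lower : ∀ r : Fin (4 * N), r ∈ T → r.val / N = 3 → f (r.val % N) = t := by
    intro r hr hsec
    have hr' := memT r hr
    have h3N : 3 * N ≤ r.val := by
      have := (Nat.le_div_iff_mul_le hN).mp (le_of_eq hsec.symm)
      omega
    rw [dif_neg (by omega)] at hr'
    have hmd : r.val % N + N * (r.val / N) = r.val := Nat.mod_add_div _ _
    rw [hsec] at hmd
    have : r.val % N = r.val - 3 * N := by omega
    rw [this]; exact hr'
  have mem_upper : ∀ r : Fin (4 * N), r ∈ T → r.val / N ≠ 3 → r.val / N = t.val := by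
    intro r hr hsec
    have h4 : r.val < 4 * N := r.isLt
    have hlt : r.val / N < 4 := Nat.div_lt_of_lt_mul (by omega)
    have h3 : r.val < 3 * N := by
      have h1 : r.val / N < 3 := by omega
      have := (Nat.div_lt_iff_lt_mul hN).mp h1
      omega
    have hr' := memT r hr
    rw [dif_pos h3] at hr'
    exact congrArg Fin.val hr'
  have key : ∀ ρ : Fin 11 → CellT N T, AntR0 N adj T ρ → ConseqR0 N adj T ρ := by
    intro ρ hA
    obtain ⟨hNoSp, hpx, hvx, hc1x, hs1, hv1, hc2x, hs2, hv2, hc12, hpy, hvy,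
      hs4, hp4, hs5, hp5, hpz, hsz, hp7, hne7, hv7, hpu, hvu,
      hs9, hp9, hs10, hp10, hv9, hv10⟩ := hA
    beta_reduce at hNoSp hpx hvx hs1 hv1 hs2 hv2 hpy hvy hs4 hp4 hs5 hp5 hpz hsz hp7 hv7 hpu hvu hs9 hp9 hs10 hp10 hv9 hv10
    -- row of x is in an upper section
    have hsecx : ((ρ 0).1 : Fin (4 * N)).val / N ≠ 3 := by
      rw [MG_idp _ _ hpx, decide_eq_true_iff] at hvx
      exact hvx
    set i : ℕ := ((ρ 0).1 : Fin (4 * N)).val % N with hi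
    have hiN : i < N := Nat.mod_lt _ hN
    -- columns of c₁ and c₂
    have hno1 := hNoSp 1 (by decide)
    have hno2 := hNoSp 2 (by decide)
    rw [hs1] at hv1
    rw [hs2] at hv2
    have hc1 : ((ρ 1).2).val = 3 + i ∨ ((ρ 1).2).val = 3 + N + i := by
      rcases MG_upper_cols _ _ hsecx hno1.1 hno1.2 hv1 with h2 | h | h
      · exact absurd (Prod.ext (Subtype.ext hs1) (Fin.ext (by rw [h2, hpx]))) hc1x
      · exact Or.inl h
      · exact Or.inr h
    have hc2 : ((ρ 2).2).val = 3 + i ∨ ((ρ 2).2).val = 3 + N + i := by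
      rcases MG_upper_cols _ _ hsecx hno2.1 hno2.2 hv2 with h2 | h | h
      · exact absurd (Prod.ext (Subtype.ext hs2) (Fin.ext (by rw [h2, hpx]))) hc2x
      · exact Or.inl h
      · exact Or.inr h
    have hcol12 : ((ρ 1).2) ≠ ((ρ 2).2) := by
      intro h
      exact hc12 (Prod.ext (Subtype.ext (hs1.trans hs2.symm)) h)
    -- row of y is in the lower section
    have hsecy : ((ρ 3).1 : Fin (4 * N)).val / N = 3 := by
      rw [MG_idp _ _ hpy, decide_eq_false_iff_not, not_not] at hvy
      exact hvy
    have hfy : f (((ρ 3).1 : Fin (4 * N)).val % N) = t := mem_lower _ (ρ 3).1.2 hsecy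
    -- row of u is in the lower section
    have hsecu : ((ρ 8).1 : Fin (4 * N)).val / N = 3 := by
      rw [MG_idp _ _ hpu, decide_eq_false_iff_not, not_not] at hvu
      exact hvu
    have hfu : f (((ρ 8).1 : Fin (4 * N)).val % N) = t := mem_lower _ (ρ 8).1.2 hsecu
    -- the f-cells force the row of u to have index i
    rw [← hs9, hp9] at hv9
    rw [← hs10, hp10] at hv10
    have hmi : ((ρ 8).1 : Fin (4 * N)).val % N = i := by
      rcases hc1 with h | h
      · exact MG_upper_left_true _ _ h hiN hv9
      · rcases hc2 with h' | h'
        · exact MG_upper_left_true _ _ h' hiN hv10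
        · exact absurd (Fin.ext (h.trans h'.symm)) hcol12
    have hfi : f i = t := hmi ▸ hfu
    -- the color classes are independent: adj (index y) i = false
    have hadj : adj (((ρ 3).1 : Fin (4 * N)).val % N) i = false := by
      set j : ℕ := ((ρ 3).1 : Fin (4 * N)).val % N with hj
      by_cases hji : j = i
      · rw [hji]; exact hirr i
      · cases h : adj j i with
        | false => rfl
        | true => exact absurd (hfy.trans hfi.symm) (hf j i (Nat.mod_lt _ hN) hiN h)
    constructor
    · -- one of d₁, d₂ has value 1
      rcases hc1 with h | h
      · right
        have hc2r : ((ρ 2).2).val = 3 + N + i := by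
          rcases hc2 with h' | h'
          · exact absurd (Fin.ext (h.trans h'.symm)) hcol12
          · exact h'
        show MG N adj ((ρ 5).1 : Fin (4 * N)) ((ρ 5).2) = true
        rw [hs5, MG_lower_right _ _ hsecy (show ((ρ 5).2).val = 3 + N + i by rw [hp5]; exact hc2r)]
        rw [hadj]; rfl
      · left
        show MG N adj ((ρ 4).1 : Fin (4 * N)) ((ρ 4).2) = true
        rw [hs4, MG_lower_right _ _ hsecy (show ((ρ 4).2).val = 3 + N + i by rw [hp4]; exact h)]
        rw [hadj]; rfl
    · -- val(z) = 0, i.e. the row of e lies in the lower section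
      show MG N adj ((ρ 6).1 : Fin (4 * N)) ((ρ 6).2) = false
      rw [MG_idp _ _ hpz, decide_eq_false_iff_not, not_not, hsz]
      by_contra hsece
      -- then the row of e lies in the upper section of block t, hence equals the row of x
      have hte : ((ρ 7).1 : Fin (4 * N)).val / N = t.val := mem_upper _ (ρ 7).1.2 hsece
      have htx : ((ρ 0).1 : Fin (4 * N)).val / N = t.val := mem_upper _ (ρ 0).1.2 hsecx
      rw [hp7] at hv7
      have hie : ((ρ 7).1 : Fin (4 * N)).val % N = i := by
        rcases hc1 with h | h
        · exact MG_upper_left_true _ _ h hiN hv7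
        · exact MG_upper_right_true _ _ hsece h hv7
      have hre : ((ρ 7).1 : Fin (4 * N)) = ((ρ 1).1 : Fin (4 * N)) := by
        rw [hs1]
        apply Fin.ext
        have e1 := Nat.div_add_mod (((ρ 7).1 : Fin (4 * N)).val) N
        have e2 := Nat.div_add_mod (((ρ 0).1 : Fin (4 * N)).val) N
        rw [hte, hie] at e1
        rw [htx, ← hi] at e2
        omega
      exact hne7 (Prod.ext (Subtype.ext hre) hp7)
  unfold sigmaR0
  have hcard : Nat.card {ρ : Fin 11 → CellT N T // AntR0 N adj T ρ ∧ ConseqR0 N adj T ρ}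
      = Nat.card {ρ : Fin 11 → CellT N T // AntR0 N adj T ρ} :=
    Nat.card_congr (Equiv.subtypeEquivRight fun ρ => ⟨And.left, fun h => ⟨h, key ρ h⟩⟩)
  by_cases h0 : Nat.card {ρ : Fin 11 → CellT N T // AntR0 N adj T ρ} = 0
  · simp [h0]
  · simp only [if_neg h0, hcard]
    rw [div_self (by exact_mod_cast h0)]
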